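/- Let f : 2^F → ℝ be a nonnegative monotone set function with submodularity ratio γ ∈ (0,1] with respect to the greedy solution S^# of cardinality κ, i.e., for every L ⊆ S^# and every E with |E| ≤ κ and E ∩ L = ∅, ∑_{e∈E}(f(L∪{e})−f(L)) ≥ γ (f(L∪E)−f(L)). Then the greedy algorithm satisfies f(S^#) ≥ (1 − e^{−γ}) f(S*), where S* is an optimal solution of max{f(S) : |S| ≤ κ}. -/

import Mathlib

open BigOperators

/-- Approximate submodular maximization (Das–Kempe): for a nonnegative monotone set function
with submodularity ratio `γ` with respect to the greedy solution `S^#` of cardinality `κ`,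
the greedy algorithm satisfies `f(S^#) ≥ (1 − e^{−γ}) f(S*)`. -/
theorem greedy_approx_submodular_guarantee {α : Type*} [Fintype α] [DecidableEq α]
    (f : Finset α → ℝ) (κ : ℕ) (hκ : 1 ≤ κ)
    (hnn : ∀ A : Finset α, 0 ≤ f A) (hnorm : f ∅ = 0)
    (hmono : ∀ A B : Finset α, A ⊆ B → f A ≤ f B)
    (S : ℕ → Finset α) (hS0 : S 0 = ∅)
    (hstep : ∀ i < κ, ∃ g, g ∉ S i ∧ S (i + 1) = insert g (S i) ∧
      ∀ e, f (insert e (S i)) ≤ f (insert g (S i)))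
    (γ : ℝ) (hγ0 : 0 < γ) (hγ1 : γ ≤ 1)
    (hratio : ∀ L : Finset α, L ⊆ S κ → ∀ E : Finset α, E.card ≤ κ → Disjoint E L →
      γ * (f (L ∪ E) - f L) ≤ ∑ e ∈ E, (f (insert e L) - f L))
    (T : Finset α) (hT : T.card ≤ κ)
    (hTopt : ∀ S' : Finset α, S'.card ≤ κ → f S' ≤ f T) :
    (1 - Real.exp (-γ)) * f T ≤ f (S κ) := by
  have hκR : (0:ℝ) < κ := by exact_mod_cast hκ
  have hκ1 : (1:ℝ) ≤ κ := by exact_mod_cast hκ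
  -- S increasing
  have hstep' : ∀ i < κ, S i ⊆ S (i + 1) := by
    intro i hi
    obtain ⟨g, _, hSi, -⟩ := hstep i hi
    rw [hSi]; exact Finset.subset_insert _ _
  have hsub : ∀ i, i ≤ κ → S i ⊆ S κ := by
    intro i hi
    have h : ∀ j, i ≤ j → j ≤ κ → S i ⊆ S j := by
      intro j hij
      induction j, hij using Nat.le_induction with
      | base => intro _; exact subset_rfl
      | succ n hn ih =>
        intro hnκ
        exact (ih (by omega)).trans (hstep' n (by omega))
    exact h κ hi le_rfl
  -- key per-step inequality
  have key : ∀ i < κ, γ * (f T - f (S i)) ≤ (κ : ℝ) * (f (S (i+1)) - f (S i)) := by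
    intro i hi
    obtain ⟨g, hg, hSi, hmax⟩ := hstep i hi
    set E : Finset α := T \ S i with hE
    have hcard : E.card ≤ κ := le_trans (Finset.card_le_card (Finset.sdiff_subset)) hT
    have hdisj : Disjoint E (S i) := Finset.sdiff_disjoint
    have h1 := hratio (S i) (hsub i (le_of_lt hi)) E hcard hdisj
    have hd : 0 ≤ f (S (i+1)) - f (S i) := by
      have := hmono (S i) (S (i+1)) (hstep' i hi)
      linarith
    have h2 : ∑ e ∈ E, (f (insert e (S i)) - f (S i)) ≤ (κ : ℝ) * (f (S (i+1)) - f (S i)) := by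
      calc ∑ e ∈ E, (f (insert e (S i)) - f (S i))
          ≤ ∑ _e ∈ E, (f (S (i+1)) - f (S i)) := by
            apply Finset.sum_le_sum
            intro e _
            have := hmax e
            rw [hSi]; linarith
        _ = (E.card : ℝ) * (f (S (i+1)) - f (S i)) := by
            rw [Finset.sum_const, nsmul_eq_mul]
        _ ≤ (κ : ℝ) * (f (S (i+1)) - f (S i)) := by
            apply mul_le_mul_of_nonneg_right _ hd
            exact_mod_cast hcard
    have h3 : f T ≤ f (S i ∪ E) := by
      apply hmono
      rw [hE, Finset.union_sdiff_self_eq_union]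
      exact Finset.subset_union_right
    have h4 : γ * (f T - f (S i)) ≤ γ * (f (S i ∪ E) - f (S i)) := by
      apply mul_le_mul_of_nonneg_left _ (le_of_lt hγ0)
      linarith
    linarith
  -- induction
  set r : ℝ := 1 - γ / κ with hr
  have hr0 : 0 ≤ r := by
    rw [hr, sub_nonneg, div_le_one hκR]; linarith
  have main : ∀ i ≤ κ, f T - f (S i) ≤ r ^ i * f T := by
    intro i
    induction i with
    | zero => intro _; rw [hS0, hnorm]; simp
    | succ n ih =>
      intro hn
      have hnκ : n < κ := by omega
      have ihn := ih (le_of_lt hnκ)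
      have hk := key n hnκ
      have hdiv : (γ / κ) * (f T - f (S n)) ≤ f (S (n+1)) - f (S n) := by
        rw [div_mul_eq_mul_div, div_le_iff₀ hκR]
        linarith
      have step : f T - f (S (n+1)) ≤ r * (f T - f (S n)) := by
        have hrw : r * (f T - f (S n)) = (f T - f (S n)) - (γ / ↑κ) * (f T - f (S n)) := by
          rw [hr]; ring
        rw [hrw]; linarith
      calc f T - f (S (n+1)) ≤ r * (f T - f (S n)) := step
        _ ≤ r * (r ^ n * f T) := mul_le_mul_of_nonneg_left ihn hr0
        _ = r ^ (n + 1) * f T := by ring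
  have hend := main κ le_rfl
  have hpow : r ^ κ ≤ Real.exp (-γ) := by
    have h1 : r ≤ Real.exp (-(γ / κ)) := by
      have := Real.add_one_le_exp (-(γ / κ))
      rw [hr]; linarith
    calc r ^ κ ≤ Real.exp (-(γ / κ)) ^ κ := pow_le_pow_left₀ hr0 h1 κ
      _ = Real.exp ((κ : ℝ) * (-(γ / κ))) := by rw [← Real.exp_nat_mul]
      _ = Real.exp (-γ) := by
          congr 1
          field_simp
  have hfT : 0 ≤ f T := hnn T
  have : r ^ κ * f T ≤ Real.exp (-γ) * f T := mul_le_mul_of_nonneg_right hpow hfT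
  linarith
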